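/- Let F be a field with char F ≠ 2. Then every derivation of the Lie algebra gl_J(F) of Jacobi matrices is inner: for every Lie algebra derivation d there exists y ∈ MJ(F) such that d(a) = ya − ay for all a ∈ MJ(F). -/

import Mathlib

set_option linter.unreachableTactic false
set_option linter.unusedTactic false

/-- The product of two `ℤ × ℤ` matrices, defined via `finsum`; it is well defined on
Jacobi matrices. -/
noncomputable def matMul {F : Type*} [Field F] (a b : Matrix ℤ ℤ F) : Matrix ℤ ℤ F :=
  fun i j => ∑ᶠ k, a i k * b k j

/-- A Jacobi matrix: a `ℤ × ℤ` matrix having finitely many nonzero diagonals, i.e.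
there is `n : ℕ` with `a i j = 0` whenever `|i - j| > n`. -/
def IsJacobi {F : Type*} [Field F] (a : Matrix ℤ ℤ F) : Prop :=
  ∃ n : ℕ, ∀ i j : ℤ, (n : ℤ) < |i - j| → a i j = 0

namespace S13
variable {F : Type*} [Field F]

/-- matrix unit -/
def E (k l : ℤ) : Matrix ℤ ℤ F := fun i j => if i = k ∧ j = l then 1 else 0

/-- m-th diagonal matrix with entries f -/
def sh (m : ℤ) (f : ℤ → F) : Matrix ℤ ℤ F := fun i j => if j = i + m then f i else 0

lemma mul_E (a : Matrix ℤ ℤ F) (k l i j : ℤ) :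
    matMul a (E k l) i j = if j = l then a i k else 0 := by
  unfold matMul E
  rw [finsum_eq_single _ k]
  · by_cases h : j = l <;> simp [h]
  · intro t ht; simp [ht]

lemma E_mul (a : Matrix ℤ ℤ F) (k l i j : ℤ) :
    matMul (E k l) a i j = if i = k then a l j else 0 := by
  unfold matMul E
  rw [finsum_eq_single _ l]
  · by_cases h : i = k <;> simp [h]
  · intro t ht; simp [ht]

lemma sh_mul (m : ℤ) (f : ℤ → F) (a : Matrix ℤ ℤ F) (i j : ℤ) :
    matMul (sh m f) a i j = f i * a (i + m) j := by
  unfold matMul sh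
  rw [finsum_eq_single _ (i + m)]
  · simp
  · intro t ht; simp [ht]

lemma mul_sh (a : Matrix ℤ ℤ F) (m : ℤ) (f : ℤ → F) (i j : ℤ) :
    matMul a (sh m f) i j = a i (j - m) * f (j - m) := by
  unfold matMul sh
  rw [finsum_eq_single _ (j - m)]
  · simp
  · intro t ht; have : ¬ j = t + m := by omega
    simp [this]

lemma jE (k l : ℤ) : IsJacobi (E k l : Matrix ℤ ℤ F) := by
  refine ⟨(k - l).natAbs, fun i j h => ?_⟩
  unfold E
  rcases eq_or_ne i k with rfl | hi
  · rcases eq_or_ne j l with rfl | hj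
    · rw [Int.abs_eq_natAbs] at h; omega
    · simp [hj]
  · simp [hi]

lemma jsh (m : ℤ) (f : ℤ → F) : IsJacobi (sh m f) := by
  refine ⟨m.natAbs, fun i j h => ?_⟩
  unfold sh
  have : ¬ j = i + m := by rw [Int.abs_eq_natAbs] at h; omega
  simp [this]

lemma jadd {a b : Matrix ℤ ℤ F} (ha : IsJacobi a) (hb : IsJacobi b) : IsJacobi (a + b) := by
  obtain ⟨n, hn⟩ := ha; obtain ⟨n', hn'⟩ := hb
  refine ⟨max n n', fun i j h => ?_⟩
  have h1 : a i j = 0 := hn i j (by rw [Int.abs_eq_natAbs] at h ⊢; omega)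
  have h2 : b i j = 0 := hn' i j (by rw [Int.abs_eq_natAbs] at h ⊢; omega)
  show a i j + b i j = 0
  rw [h1, h2, add_zero]

lemma jsmul {a : Matrix ℤ ℤ F} (c : F) (ha : IsJacobi a) : IsJacobi (c • a) := by
  obtain ⟨n, hn⟩ := ha
  refine ⟨n, fun i j h => ?_⟩
  show c * a i j = 0
  rw [hn i j h, mul_zero]

lemma jneg {a : Matrix ℤ ℤ F} (ha : IsJacobi a) : IsJacobi (-a) := by
  obtain ⟨n, hn⟩ := ha
  refine ⟨n, fun i j h => ?_⟩
  show -(a i j) = 0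
  rw [hn i j h, neg_zero]

lemma jsub {a b : Matrix ℤ ℤ F} (ha : IsJacobi a) (hb : IsJacobi b) : IsJacobi (a - b) := by
  rw [sub_eq_add_neg]; exact jadd ha (jneg hb)

lemma jmul {a b : Matrix ℤ ℤ F} (ha : IsJacobi a) (hb : IsJacobi b) : IsJacobi (matMul a b) := by
  obtain ⟨n, hn⟩ := ha; obtain ⟨n', hn'⟩ := hb
  refine ⟨n + n', fun i j h => ?_⟩
  apply finsum_eq_zero_of_forall_eq_zero
  intro k
  rcases le_or_gt |i - k| n with h1 | h1
  · have : (n' : ℤ) < |k - j| := by rw [Int.abs_eq_natAbs] at h h1 ⊢; omega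
    rw [hn' k j this, mul_zero]
  · rw [hn i k h1, zero_mul]

lemma matMul_apply_left (a b : Matrix ℤ ℤ F) (n : ℕ) (ha : ∀ i j, (n:ℤ) < |i - j| → a i j = 0)
    (i j : ℤ) : matMul a b i j = ∑ k ∈ Finset.Icc (i - n) (i + n), a i k * b k j := by
  apply finsum_eq_finset_sum_of_support_subset
  intro k hk
  simp only [Function.mem_support] at hk
  simp only [Finset.coe_Icc, Set.mem_Icc]
  by_contra hc
  have : (n:ℤ) < |i - k| := by rw [Int.abs_eq_natAbs]; omega
  rw [ha i k this, zero_mul] at hk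
  exact hk rfl

lemma matMul_apply_right (a b : Matrix ℤ ℤ F) (n : ℕ) (hb : ∀ i j, (n:ℤ) < |i - j| → b i j = 0)
    (i j : ℤ) : matMul a b i j = ∑ k ∈ Finset.Icc (j - n) (j + n), a i k * b k j := by
  apply finsum_eq_finset_sum_of_support_subset
  intro k hk
  simp only [Function.mem_support] at hk
  simp only [Finset.coe_Icc, Set.mem_Icc]
  by_contra hc
  have : (n:ℤ) < |k - j| := by rw [Int.abs_eq_natAbs]; omega
  rw [hb k j this, mul_zero] at hk
  exact hk rfl

end S13
-- ===== part 2: bilinearity, assoc, bracket =====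
namespace S13
variable {F : Type*} [Field F]

/-- identity matrix -/
def IdM : Matrix ℤ ℤ F := sh 0 (fun _ => 1)

lemma IdM_mul (a : Matrix ℤ ℤ F) : matMul IdM a = a := by
  funext i j; rw [show (IdM : Matrix ℤ ℤ F) = sh 0 (fun _ => 1) from rfl, sh_mul]
  simp

lemma mul_IdM (a : Matrix ℤ ℤ F) : matMul a IdM = a := by
  funext i j; rw [show (IdM : Matrix ℤ ℤ F) = sh 0 (fun _ => 1) from rfl, mul_sh]
  simp

lemma jIdM : IsJacobi (IdM : Matrix ℤ ℤ F) := jsh 0 _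

-- distributivity: needs one factor banded
lemma mul_sub_left {a : Matrix ℤ ℤ F} (ha : IsJacobi a) (u v : Matrix ℤ ℤ F) :
    matMul a (u - v) = matMul a u - matMul a v := by
  obtain ⟨n, hn⟩ := ha
  funext i j
  show _ = matMul a u i j - matMul a v i j
  rw [matMul_apply_left a (u - v) n hn, matMul_apply_left a u n hn,
    matMul_apply_left a v n hn, ← Finset.sum_sub_distrib]
  apply Finset.sum_congr rfl
  intro k _
  show a i k * (u k j - v k j) = _
  ring

lemma mul_add_left {a : Matrix ℤ ℤ F} (ha : IsJacobi a) (u v : Matrix ℤ ℤ F) :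
    matMul a (u + v) = matMul a u + matMul a v := by
  obtain ⟨n, hn⟩ := ha
  funext i j
  show _ = matMul a u i j + matMul a v i j
  rw [matMul_apply_left a (u + v) n hn, matMul_apply_left a u n hn,
    matMul_apply_left a v n hn, ← Finset.sum_add_distrib]
  apply Finset.sum_congr rfl
  intro k _
  show a i k * (u k j + v k j) = _
  ring

lemma sub_mul_right {b : Matrix ℤ ℤ F} (hb : IsJacobi b) (u v : Matrix ℤ ℤ F) :
    matMul (u - v) b = matMul u b - matMul v b := by
  obtain ⟨n, hn⟩ := hb
  funext i j
  show _ = matMul u b i j - matMul v b i j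
  rw [matMul_apply_right (u - v) b n hn, matMul_apply_right u b n hn,
    matMul_apply_right v b n hn, ← Finset.sum_sub_distrib]
  apply Finset.sum_congr rfl
  intro k _
  show (u i k - v i k) * b k j = _
  ring

lemma add_mul_right {b : Matrix ℤ ℤ F} (hb : IsJacobi b) (u v : Matrix ℤ ℤ F) :
    matMul (u + v) b = matMul u b + matMul v b := by
  obtain ⟨n, hn⟩ := hb
  funext i j
  show _ = matMul u b i j + matMul v b i j
  rw [matMul_apply_right (u + v) b n hn, matMul_apply_right u b n hn,
    matMul_apply_right v b n hn, ← Finset.sum_add_distrib]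
  apply Finset.sum_congr rfl
  intro k _
  show (u i k + v i k) * b k j = _
  ring

lemma mul_smul_left {a : Matrix ℤ ℤ F} (ha : IsJacobi a) (c : F) (u : Matrix ℤ ℤ F) :
    matMul a (c • u) = c • matMul a u := by
  obtain ⟨n, hn⟩ := ha
  funext i j
  show _ = c * matMul a u i j
  rw [matMul_apply_left a (c • u) n hn, matMul_apply_left a u n hn, Finset.mul_sum]
  apply Finset.sum_congr rfl
  intro k _
  show a i k * (c * u k j) = _
  ring

lemma smul_mul_right {b : Matrix ℤ ℤ F} (hb : IsJacobi b) (c : F) (u : Matrix ℤ ℤ F) :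
    matMul (c • u) b = c • matMul u b := by
  obtain ⟨n, hn⟩ := hb
  funext i j
  show _ = c * matMul u b i j
  rw [matMul_apply_right (c • u) b n hn, matMul_apply_right u b n hn, Finset.mul_sum]
  apply Finset.sum_congr rfl
  intro k _
  show (c * u i k) * b k j = _
  ring

lemma matMul_assoc {a c : Matrix ℤ ℤ F} (b : Matrix ℤ ℤ F)
    (ha : IsJacobi a) (hc : IsJacobi c) :
    matMul (matMul a b) c = matMul a (matMul b c) := by
  obtain ⟨na, hna⟩ := ha
  obtain ⟨nc, hnc⟩ := hc
  funext i j
  rw [matMul_apply_right (matMul a b) c nc hnc, matMul_apply_left a (matMul b c) na hna]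
  have L : ∀ k, matMul a b i k = ∑ l ∈ Finset.Icc (i - na) (i + na), a i l * b l k :=
    fun k => matMul_apply_left a b na hna i k
  have R : ∀ l, matMul b c l j = ∑ k ∈ Finset.Icc (j - nc) (j + nc), b l k * c k j :=
    fun l => matMul_apply_right b c nc hnc l j
  simp only [L, R, Finset.sum_mul, Finset.mul_sum]
  rw [Finset.sum_comm]
  apply Finset.sum_congr rfl; intro l _
  apply Finset.sum_congr rfl; intro k _
  ring

/-- Lie bracket -/
noncomputable def br (a b : Matrix ℤ ℤ F) : Matrix ℤ ℤ F := matMul a b - matMul b a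

lemma jbr {a b : Matrix ℤ ℤ F} (ha : IsJacobi a) (hb : IsJacobi b) : IsJacobi (br a b) :=
  jsub (jmul ha hb) (jmul hb ha)

/-- Leibniz rule for ad -/
lemma leib {y a b : Matrix ℤ ℤ F} (hy : IsJacobi y) (ha : IsJacobi a) (hb : IsJacobi b) :
    br y (br a b) = br (br y a) b + br a (br y b) := by
  unfold br
  rw [mul_sub_left hy, sub_mul_right hy, sub_mul_right hb, mul_sub_left hb,
    mul_sub_left ha, sub_mul_right ha,
    matMul_assoc b ha hy, matMul_assoc a hb hy,
    matMul_assoc a hy hb, matMul_assoc y ha hb,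
    matMul_assoc b hy ha, matMul_assoc y hb ha]
  abel

end S13
-- ===== bracket linearity helpers =====
namespace S13
variable {F : Type*} [Field F]

lemma br_add_right {g : Matrix ℤ ℤ F} (hg : IsJacobi g) (u v : Matrix ℤ ℤ F) :
    br g (u + v) = br g u + br g v := by
  unfold br
  rw [mul_add_left hg, add_mul_right hg]
  abel

lemma br_sub_right {g : Matrix ℤ ℤ F} (hg : IsJacobi g) (u v : Matrix ℤ ℤ F) :
    br g (u - v) = br g u - br g v := by
  unfold br
  rw [mul_sub_left hg, sub_mul_right hg]
  abel

lemma br_smul_right {g : Matrix ℤ ℤ F} (hg : IsJacobi g) (c : F) (u : Matrix ℤ ℤ F) :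
    br g (c • u) = c • br g u := by
  unfold br
  rw [mul_smul_left hg, smul_mul_right hg, smul_sub]

lemma br_add_left {g : Matrix ℤ ℤ F} (hg : IsJacobi g) (u v : Matrix ℤ ℤ F) :
    br (u + v) g = br u g + br v g := by
  unfold br
  rw [mul_add_left hg, add_mul_right hg]
  abel

lemma br_sub_left {g : Matrix ℤ ℤ F} (hg : IsJacobi g) (u v : Matrix ℤ ℤ F) :
    br (u - v) g = br u g - br v g := by
  unfold br
  rw [mul_sub_left hg, sub_mul_right hg]
  abel

lemma br_smul_left {g : Matrix ℤ ℤ F} (hg : IsJacobi g) (c : F) (u : Matrix ℤ ℤ F) :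
    br (c • u) g = c • br u g := by
  unfold br
  rw [mul_smul_left hg, smul_mul_right hg, smul_sub]

lemma matMul_zero_right (u : Matrix ℤ ℤ F) : matMul u 0 = 0 := by
  funext i j
  apply finsum_eq_zero_of_forall_eq_zero
  intro k
  show u i k * 0 = 0
  ring

lemma matMul_zero_left (u : Matrix ℤ ℤ F) : matMul 0 u = 0 := by
  funext i j
  apply finsum_eq_zero_of_forall_eq_zero
  intro k
  show 0 * u k j = 0
  ring

lemma br_zero_right (u : Matrix ℤ ℤ F) : br u 0 = 0 := by
  unfold br
  rw [matMul_zero_right, matMul_zero_left, sub_zero]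

lemma br_neg_right {g : Matrix ℤ ℤ F} (hg : IsJacobi g) (u : Matrix ℤ ℤ F) :
    br g (-u) = -(br g u) := by
  rw [show -u = (0:Matrix ℤ ℤ F) - u from (zero_sub u).symm, br_sub_right hg,
    br_zero_right, zero_sub]

lemma br_IdM_left (u : Matrix ℤ ℤ F) : br IdM u = 0 := by
  unfold br
  rw [IdM_mul, mul_IdM, sub_self]

lemma br_IdM_right (u : Matrix ℤ ℤ F) : br u IdM = 0 := by
  unfold br
  rw [IdM_mul, mul_IdM, sub_self]

end S13
-- ===== part 3: concrete bracket values, extraction, perfectness pieces =====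
namespace S13
variable {F : Type*} [Field F]

lemma E_mul_E (k l p q : ℤ) :
    matMul (E k l) (E p q) = if l = p then (E k q : Matrix ℤ ℤ F) else 0 := by
  by_cases hlp : l = p
  · subst hlp
    rw [if_pos rfl]
    funext i j
    rw [E_mul]
    unfold E
    by_cases h1 : i = k <;> simp [h1]
  · rw [if_neg hlp]
    funext i j
    rw [E_mul]
    unfold E
    by_cases h1 : i = k <;> simp [h1, hlp]

lemma br_ee (i l : ℤ) (h : i ≠ l) : br (E i i) (E l l) = (0 : Matrix ℤ ℤ F) := by
  unfold br
  rw [E_mul_E, E_mul_E, if_neg h, if_neg (Ne.symm h), sub_zero]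

lemma br_E_e (k l j : ℤ) (hk : j ≠ k) (hl : j ≠ l) :
    br (E k l) (E j j) = (0 : Matrix ℤ ℤ F) := by
  unfold br
  rw [E_mul_E, E_mul_E, if_neg (Ne.symm hl), if_neg hk, sub_zero]

lemma br_e_E (k l : ℤ) (h : k ≠ l) : br (E k k) (E k l) = (E k l : Matrix ℤ ℤ F) := by
  unfold br
  rw [E_mul_E, E_mul_E, if_pos rfl, if_neg (Ne.symm h), sub_zero]

lemma br_E_Erev (k l : ℤ) : br (E k l) (E l k) = (E k k : Matrix ℤ ℤ F) - E l l := by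
  unfold br
  rw [E_mul_E, E_mul_E, if_pos rfl, if_pos rfl]

lemma br_EE_mid (k m l : ℤ) (h : l ≠ k) :
    br (E k m) (E m l) = (E k l : Matrix ℤ ℤ F) := by
  unfold br
  rw [E_mul_E, E_mul_E, if_pos rfl, if_neg h, sub_zero]

lemma br_e_diag (i : ℤ) (f : ℤ → F) : br (E i i) (sh 0 f) = 0 := by
  funext k j
  show matMul (E i i) (sh 0 f) k j - matMul (sh 0 f) (E i i) k j = 0
  rw [E_mul, sh_mul]
  unfold sh E
  by_cases h1 : k = i <;> by_cases h2 : j = i <;> simp [h1, h2]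

/-- extraction identity -/
lemma extraction (c : Matrix ℤ ℤ F) (i j : ℤ) (hij : i ≠ j) :
    br (E i i) (br (E j j) c) = -((c i j) • E i j + (c j i) • E j i) := by
  have hb : ∀ p q, br (E j j) c p q =
      (if p = j then c j q else 0) - (if q = j then c p j else 0) := by
    intro p q
    show matMul (E j j) c p q - matMul c (E j j) p q = _
    rw [E_mul, mul_E]
  funext m n
  show matMul (E i i) (br (E j j) c) m n - matMul (br (E j j) c) (E i i) m n = _
  rw [E_mul, mul_E]
  simp only [Matrix.neg_apply, Matrix.add_apply, Matrix.smul_apply, smul_eq_mul]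
  rw [hb, hb]
  unfold E
  by_cases h1 : m = i <;> by_cases h2 : n = j <;> by_cases h3 : m = j <;>
    by_cases h4 : n = i <;> simp_all <;> ring

end S13
namespace S13
variable {F : Type*} [Field F]

lemma br_unit_right (u : Matrix ℤ ℤ F) (k l p q : ℤ) :
    br u (E k l) p q = (if q = l then u p k else 0) - (if p = k then u l q else 0) := by
  show matMul u (E k l) p q - matMul (E k l) u p q = _
  rw [mul_E, E_mul]

lemma br_unit_left (k l : ℤ) (u : Matrix ℤ ℤ F) (p q : ℤ) :
    br (E k l) u p q = (if p = k then u l q else 0) - (if q = l then u p k else 0) := by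
  show matMul (E k l) u p q - matMul u (E k l) p q = _
  rw [mul_E, E_mul]

end S13
-- ===== part 4: perfectness =====
namespace S13
variable {F : Type*} [Field F]

lemma br_neg_swap (a b : Matrix ℤ ℤ F) : br a b = -(br b a) := by
  unfold br; rw [neg_sub]

lemma matMul_zero_zero : matMul (0 : Matrix ℤ ℤ F) 0 = 0 := by
  funext i j
  apply finsum_eq_zero_of_forall_eq_zero
  intro k
  show (0:F) * 0 = 0
  ring

lemma br_zero_zero : br (0 : Matrix ℤ ℤ F) 0 = 0 := by
  unfold br; rw [matMul_zero_zero, sub_zero]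

lemma jzero : IsJacobi (0 : Matrix ℤ ℤ F) := ⟨0, by simp⟩

lemma br_diag_sh (χ : ℤ → F) (m : ℤ) (g : ℤ → F) :
    br (sh 0 χ) (sh m g) = sh m (fun i => (χ i - χ (i + m)) * g i) := by
  funext i j
  show matMul (sh 0 χ) (sh m g) i j - matMul (sh m g) (sh 0 χ) i j = _
  rw [sh_mul, mul_sh]
  unfold sh
  simp only [add_zero, sub_zero]
  split_ifs with h
  · rw [h]; ring
  · ring

lemma br_sh_diag_step (s : ℤ → F) :
    br (sh 1 s) (sh (-1) (fun _ => (1:F))) = sh 0 (fun i => s i - s (i - 1)) := by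
  funext i j
  show matMul (sh 1 s) (sh (-1) fun _ => (1:F)) i j
      - matMul (sh (-1) fun _ => (1:F)) (sh 1 s) i j = _
  rw [mul_sh, sh_mul]
  unfold sh
  by_cases h : j = i
  · have h1 : j - -1 = i + 1 := by omega
    have h2 : j = (i + -1) + 1 := by omega
    have h3 : j = i + 0 := by omega
    rw [if_pos h1, if_pos h2, if_pos h3]
    have h4 : i + -1 = i - 1 := by ring
    rw [h4]
    ring
  · have h1 : ¬ (j - -1 = i + 1) := by omega
    have h2 : ¬ (j = (i + -1) + 1) := by omega
    have h3 : ¬ (j = i + 0) := by omega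
    rw [if_neg h1, if_neg h2, if_neg h3]
    ring

/-- partial sums over ℤ -/
noncomputable def psum (f : ℤ → F) (i : ℤ) : F :=
  (∑ k ∈ Finset.Icc 1 i, f k) - ∑ k ∈ Finset.Icc (i+1) 0, f k

lemma psum_step (f : ℤ → F) (i : ℤ) : psum f i - psum f (i - 1) = f i := by
  unfold psum
  rcases le_or_gt 1 i with h | h
  · have e1 : Finset.Icc (i+1) (0:ℤ) = ∅ := by apply Finset.Icc_eq_empty; omega
    have e2 : Finset.Icc (i-1+1) (0:ℤ) = ∅ := by apply Finset.Icc_eq_empty; omega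
    have e3 : Finset.Icc (1:ℤ) i = insert i (Finset.Icc 1 (i-1)) := by
      ext x; simp only [Finset.mem_Icc, Finset.mem_insert]; omega
    rw [e1, e2, e3, Finset.sum_insert (by simp only [Finset.mem_Icc, not_and, not_le]; omega)]
    simp
  · have e1 : Finset.Icc (1:ℤ) i = ∅ := by apply Finset.Icc_eq_empty; omega
    have e2 : Finset.Icc (1:ℤ) (i-1) = ∅ := by apply Finset.Icc_eq_empty; omega
    have e4 : i - 1 + 1 = i := by omega
    have e3 : Finset.Icc i (0:ℤ) = insert i (Finset.Icc (i+1) 0) := by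
      ext x; simp only [Finset.mem_Icc, Finset.mem_insert]; omega
    rw [e1, e2, e4, e3, Finset.sum_insert (by simp only [Finset.mem_Icc, not_and, not_le]; omega)]
    simp

/-- the m-th diagonal part of a matrix -/
def part (a : Matrix ℤ ℤ F) (m : ℤ) : Matrix ℤ ℤ F := sh m (fun i => a i (i + m))

lemma part_decomp {a : Matrix ℤ ℤ F} (n : ℕ) (hn : ∀ i j, (n:ℤ) < |i - j| → a i j = 0) :
    a = ∑ m ∈ Finset.Icc (-(n:ℤ)) n, part a m := by
  funext i j
  rw [Matrix.sum_apply]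
  have key : ∀ m : ℤ, part a m i j = if m = j - i then a i j else 0 := by
    intro m
    unfold part sh
    by_cases h : j = i + m
    · have h2 : m = j - i := by omega
      rw [if_pos h, if_pos h2, h]
    · have h2 : ¬ (m = j - i) := by omega
      rw [if_neg h, if_neg h2]
  simp only [key]
  rw [Finset.sum_ite_eq' (Finset.Icc (-(n:ℤ)) n) (j - i) (fun _ => a i j)]
  by_cases h : j - i ∈ Finset.Icc (-(n:ℤ)) n
  · rw [if_pos h]
  · rw [if_neg h]
    apply hn
    simp only [Finset.mem_Icc] at h
    rw [Int.abs_eq_natAbs]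
    omega

/-- every diagonal part is a sum of two brackets of Jacobi matrices -/
lemma part_is_brackets (a : Matrix ℤ ℤ F) (m : ℤ) :
    ∃ u₁ v₁ u₂ v₂ : Matrix ℤ ℤ F, IsJacobi u₁ ∧ IsJacobi v₁ ∧ IsJacobi u₂ ∧ IsJacobi v₂ ∧
      part a m = br u₁ v₁ + br u₂ v₂ := by
  rcases eq_or_ne m 0 with rfl | hm
  · refine ⟨sh 1 (psum (fun i => a i (i + 0))), sh (-1) (fun _ => 1), 0, 0,
      jsh _ _, jsh _ _, jzero, jzero, ?_⟩
    rw [br_zero_zero, add_zero, br_sh_diag_step]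
    have hfun : (fun i => psum (fun i => a i (i + 0)) i - psum (fun i => a i (i + 0)) (i - 1))
        = fun i => a i (i + 0) := funext fun i => psum_step _ i
    rw [hfun]
    rfl
  · refine ⟨sh 0 (fun i => if (i / m) % 2 = 0 then (1:F) else 0),
        sh m (fun i => if (i / m) % 2 = 0 then a i (i + m) else 0),
        sh m (fun i => if (i / m) % 2 = 0 then 0 else a i (i + m)),
        sh 0 (fun i => if (i / m) % 2 = 0 then (1:F) else 0),
        jsh _ _, jsh _ _, jsh _ _, jsh _ _, ?_⟩
    rw [br_neg_swap (sh m _) (sh 0 _), br_diag_sh, br_diag_sh]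
    unfold part
    funext i j
    simp only [Matrix.add_apply, Matrix.neg_apply]
    unfold sh
    by_cases h : j = i + m
    · rw [if_pos h, if_pos h, if_pos h]
      have hdiv : (i + m) / m = i / m + 1 := by
        have := Int.add_mul_ediv_right i 1 hm
        simpa using this
      rcases Int.emod_two_eq_zero_or_one (i / m) with hp | hp
      · have hp2 : ¬ ((i / m + 1) % 2 = 0) := by omega
        simp only [hdiv, hp, hp2, if_true, if_false, ite_true, ite_false]
        norm_num
      · have hp1 : ¬ ((i / m) % 2 = 0) := by omega
        have hp2 : (i / m + 1) % 2 = 0 := by omega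
        simp only [hdiv, hp1, hp2, if_true, if_false, ite_true, ite_false]
        norm_num
    · rw [if_neg h, if_neg h, if_neg h]
      ring

/-- bracket generation principle -/
lemma bracket_gen {P : Matrix ℤ ℤ F → Prop}
    (hPadd : ∀ u v, IsJacobi u → IsJacobi v → P u → P v → P (u + v))
    (hPbr : ∀ u v, IsJacobi u → IsJacobi v → P (br u v)) :
    ∀ a, IsJacobi a → P a := by
  intro a ha
  obtain ⟨n, hn⟩ := ha
  rw [part_decomp n hn]
  have key : ∀ s : Finset ℤ, IsJacobi (∑ m ∈ s, part a m) ∧ P (∑ m ∈ s, part a m) := by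
    intro s
    induction s using Finset.induction_on with
    | empty =>
      rw [Finset.sum_empty]
      constructor
      · exact jzero
      · have := hPbr 0 0 jzero jzero
        rwa [br_zero_zero] at this
    | @insert x s' hx ih =>
      rw [Finset.sum_insert hx]
      obtain ⟨u₁, v₁, u₂, v₂, hu₁, hv₁, hu₂, hv₂, hpart⟩ := part_is_brackets a x
      have hjpart : IsJacobi (part a x) := jsh _ _
      have hppart : P (part a x) := by
        rw [hpart]
        exact hPadd _ _ (jbr hu₁ hv₁) (jbr hu₂ hv₂) (hPbr _ _ hu₁ hv₁) (hPbr _ _ hu₂ hv₂)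
      exact ⟨jadd hjpart ih.1, hPadd _ _ hjpart ih.1 hppart ih.2⟩
  exact (key _).2

end S13
-- ===== part 5: uniform bandedness from separation =====
namespace S13
variable {F : Type*} [Field F]

lemma band_of_pairs (y : ℤ → ℤ → F)
    (sep : ∀ f : ℤ → F, ∃ N : ℕ, ∀ k i : ℤ, (N:ℤ) < |k - i| → y k i * (f i - f k) = 0) :
    ∃ n : ℕ, ∀ k i : ℤ, (n:ℤ) < |k - i| → y k i = 0 := by
  classical
  by_contra hcontra
  push_neg at hcontra
  -- per-index bounds
  have hBex : ∀ j : ℤ, ∃ B : ℕ, ∀ k : ℤ, (B:ℤ) < |k - j| → y k j = 0 ∧ y j k = 0 := by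
    intro j
    obtain ⟨N, hN⟩ := sep (fun i => if i = j then 0 else 1)
    refine ⟨N, fun k hk => ?_⟩
    have hkj : k ≠ j := by
      intro h; rw [h, sub_self, abs_zero] at hk; omega
    constructor
    · have h1 := hN k j hk
      simpa [hkj] using h1
    · have hk' : (N:ℤ) < |j - k| := by rwa [abs_sub_comm]
      have h1 := hN j k hk'
      simpa [hkj] using h1
  choose B hB using hBex
  -- the escaping pairs
  choose pk pi hgap hne using hcontra
  -- thresholds
  let M : List (ℤ × ℤ) → ℕ := fun l => l.foldr (fun p acc => max (max (B p.1) (B p.2)) acc) 0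
  have hM : ∀ (l : List (ℤ × ℤ)) (p : ℤ × ℤ), p ∈ l → max (B p.1) (B p.2) ≤ M l := by
    intro l
    induction l with
    | nil => intro p hp; simp at hp
    | cons q l ih =>
      intro p hp
      have hMc : M (q :: l) = max (max (B q.1) (B q.2)) (M l) := rfl
      rcases List.mem_cons.mp hp with rfl | hp'
      · rw [hMc]; exact le_max_left _ _
      · rw [hMc]; exact (ih p hp').trans (le_max_right _ _)
  let hist : ℕ → List (ℤ × ℤ) := fun t =>
    Nat.rec [] (fun t' prev => (pk (max t' (M prev)), pi (max t' (M prev))) :: prev) t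
  let P : ℕ → ℤ × ℤ := fun t => (pk (max t (M (hist t))), pi (max t (M (hist t))))
  have hhist : ∀ t, hist (t+1) = P t :: hist t := fun t => rfl
  have hPgap : ∀ t, ((max t (M (hist t)) : ℕ) : ℤ) < |(P t).1 - (P t).2| :=
    fun t => hgap (max t (M (hist t)))
  have hPne : ∀ t, y (P t).1 (P t).2 ≠ 0 := fun t => hne (max t (M (hist t)))
  -- freshness
  have fresh : ∀ t, ∀ p ∈ hist t,
      (P t).1 ≠ p.1 ∧ (P t).1 ≠ p.2 ∧ (P t).2 ≠ p.1 ∧ (P t).2 ≠ p.2 := by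
    intro t p hp
    have hMp := hM (hist t) p hp
    have hg := hPgap t
    refine ⟨?_, ?_, ?_, ?_⟩
    · intro h
      have e1 : |(P t).2 - p.1| = |(P t).1 - (P t).2| := by rw [← h, abs_sub_comm]
      have hb : (B p.1 : ℤ) < |(P t).2 - p.1| := by
        rw [e1]
        have h3 := le_max_left (B p.1) (B p.2)
        omega
      have h4 := (hB p.1 (P t).2 hb).2
      rw [← h] at h4
      exact hPne t h4
    · intro h
      have e1 : |(P t).2 - p.2| = |(P t).1 - (P t).2| := by rw [← h, abs_sub_comm]
      have hb : (B p.2 : ℤ) < |(P t).2 - p.2| := by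
        rw [e1]
        have h3 := le_max_right (B p.1) (B p.2)
        omega
      have h4 := (hB p.2 (P t).2 hb).2
      rw [← h] at h4
      exact hPne t h4
    · intro h
      have e1 : |(P t).1 - p.1| = |(P t).1 - (P t).2| := by rw [← h]
      have hb : (B p.1 : ℤ) < |(P t).1 - p.1| := by
        rw [e1]
        have h3 := le_max_left (B p.1) (B p.2)
        omega
      have h4 := (hB p.1 (P t).1 hb).1
      rw [← h] at h4
      exact hPne t h4
    · intro h
      have e1 : |(P t).1 - p.2| = |(P t).1 - (P t).2| := by rw [← h]
      have hb : (B p.2 : ℤ) < |(P t).1 - p.2| := by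
        rw [e1]
        have h3 := le_max_right (B p.1) (B p.2)
        omega
      have h4 := (hB p.2 (P t).1 hb).1
      rw [← h] at h4
      exact hPne t h4
  -- membership
  have hmem : ∀ s t, s < t → P s ∈ hist t := by
    intro s t
    induction t with
    | zero => omega
    | succ t ih =>
      intro hst
      rw [hhist t]
      rcases Nat.lt_succ_iff_lt_or_eq.mp hst with h | h
      · exact List.mem_cons_of_mem _ (ih h)
      · subst h; exact List.mem_cons_self
  -- the separating function
  let f : ℤ → F := fun i => if ∃ t, (P t).2 = i then 1 else 0
  obtain ⟨N, hN⟩ := sep f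
  have hgapN : (N:ℤ) < |(P N).1 - (P N).2| := by
    have := hPgap N
    have h2 : (N : ℤ) ≤ ((max N (M (hist N)) : ℕ) : ℤ) := by
      have := le_max_left N (M (hist N)); omega
    omega
  have key := hN (P N).1 (P N).2 hgapN
  have hf2 : f (P N).2 = 1 := by
    show (if ∃ t, (P t).2 = (P N).2 then (1:F) else 0) = 1
    rw [if_pos ⟨N, rfl⟩]
  have hf1 : f (P N).1 = 0 := by
    show (if ∃ t, (P t).2 = (P N).1 then (1:F) else 0) = 0
    rw [if_neg]
    rintro ⟨t, ht⟩
    rcases lt_trichotomy t N with h | h | h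
    · exact (fresh N (P t) (hmem t N h)).2.1 ht.symm
    · subst h
      have : (P t).1 ≠ (P t).2 := by
        intro he
        have := hPgap t
        rw [he, sub_self, abs_zero] at this
        omega
      exact this ht.symm
    · exact (fresh t (P N) (hmem N t h)).2.2.1 ht
  rw [hf2, hf1] at key
  have : y (P N).1 (P N).2 = 0 := by
    have h2 : y (P N).1 (P N).2 * ((1:F) - 0) = y (P N).1 (P N).2 := by ring
    rwa [h2] at key
  exact hPne N this

end S13

open S13

/-- For `char F ≠ 2`, every derivation of the Lie algebra `gl_J(F)` of
Jacobi matrices is inner: there is a Jacobi matrix `y` with `d(a) = y*a - a*y` for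
all Jacobi matrices `a`. -/
theorem stmt_13 (F : Type*) [Field F] (hchar : ringChar F ≠ 2)
    (d : Matrix ℤ ℤ F → Matrix ℤ ℤ F)
    (hmap : ∀ a, IsJacobi a → IsJacobi (d a))
    (hadd : ∀ a b, IsJacobi a → IsJacobi b → d (a + b) = d a + d b)
    (hsmul : ∀ (c : F) (a), IsJacobi a → d (c • a) = c • d a)
    (hbracket : ∀ a b, IsJacobi a → IsJacobi b →
      d (matMul a b - matMul b a) =
        (matMul (d a) b - matMul b (d a)) + (matMul a (d b) - matMul (d b) a)) :
    ∃ y : Matrix ℤ ℤ F, IsJacobi y ∧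
      ∀ a, IsJacobi a → d a = matMul y a - matMul a y := by
  classical
  have two_ne : (2:F) ≠ 0 := Ring.two_ne_zero hchar
  have d0 : d 0 = 0 := by
    have h := hsmul 0 0 jzero
    rw [zero_smul, zero_smul] at h
    exact h
  have hbr : ∀ a b, IsJacobi a → IsJacobi b →
      d (br a b) = br (d a) b + br a (d b) := fun a b ha hb => hbracket a b ha hb
  -- R1: off row/col/diag entries of d(e i) vanish
  have R1 : ∀ i k l : ℤ, k ≠ i → l ≠ i → k ≠ l → d (E i i) k l = 0 := by
    intro i k l hki hli hkl
    have h0 := hbr (E i i) (E l l) (jE i i) (jE l l)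
    rw [br_ee i l (fun h => hli h.symm), d0] at h0
    have h2 := congrFun (congrFun h0.symm k) l
    unfold br at h2
    simp only [Matrix.add_apply, Matrix.sub_apply, Matrix.zero_apply, mul_E, E_mul] at h2
    simpa [hkl, hki, hli] using h2
  -- R2: antisymmetry of rows and columns
  have R2 : ∀ i l : ℤ, l ≠ i → d (E i i) i l + d (E l l) i l = 0 := by
    intro i l hli
    have h0 := hbr (E i i) (E l l) (jE i i) (jE l l)
    rw [br_ee i l (fun h => hli h.symm), d0] at h0
    have h2 := congrFun (congrFun h0.symm i) l
    unfold br at h2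
    simp only [Matrix.add_apply, Matrix.sub_apply, Matrix.zero_apply, mul_E, E_mul] at h2
    have hil : i ≠ l := fun h => hli h.symm
    simp only [if_true, if_pos rfl, if_neg hil, if_neg hli, ite_true, ite_false] at h2
    linear_combination h2
  -- the separation property for the off-diagonal entries of y
  have sep : ∀ f : ℤ → F, ∃ N : ℕ, ∀ k i : ℤ, (N:ℤ) < |k - i| →
      d (E i i) k i * (f i - f k) = 0 := by
    intro f
    obtain ⟨N, hN⟩ := hmap (sh 0 f) (jsh 0 f)
    refine ⟨N, fun k i hk => ?_⟩
    have hki : k ≠ i := by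
      intro h; rw [h, sub_self, abs_zero] at hk; omega
    -- bracket of e i with the diagonal matrix is zero
    have h0 := hbr (E i i) (sh 0 f) (jE i i) (jsh 0 f)
    rw [br_e_diag i f, d0] at h0
    have h2 := congrFun (congrFun h0.symm k) i
    unfold br at h2
    simp only [Matrix.add_apply, Matrix.sub_apply, Matrix.zero_apply, mul_E, E_mul,
      sh_mul, mul_sh] at h2
    simp only [hki, if_false, ite_false, if_true, ite_true, sub_zero, add_zero, zero_sub,
      zero_mul, mul_zero] at h2
    have h3 : d (sh 0 f) k i = 0 := hN k i hk
    rw [h3] at h2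
    linear_combination h2
  -- helper: d of a difference
  have dsub : ∀ a b, IsJacobi a → IsJacobi b → d (a - b) = d a - d b := by
    intro a b ha hb
    have h1 : a - b = a + (-1 : F) • b := by rw [neg_one_smul, ← sub_eq_add_neg]
    rw [h1, hadd a _ ha (jsmul _ hb), hsmul (-1) b hb, neg_one_smul, ← sub_eq_add_neg]
  -- ==== relations from brackets with matrix units ====
  have EQ1 : ∀ k l j : ℤ, j ≠ k → j ≠ l →
      0 = br (d (E k l)) (E j j) + br (E k l) (d (E j j)) := by
    intro k l j hjk hjl
    have h0 := hbr (E k l) (E j j) (jE k l) (jE j j)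
    rw [br_E_e k l j hjk hjl, d0] at h0
    exact h0
  have EQ2 : ∀ k l : ℤ, k ≠ l →
      d (E k l) = br (d (E k k)) (E k l) + br (E k k) (d (E k l)) := by
    intro k l hkl
    have h0 := hbr (E k k) (E k l) (jE k k) (jE k l)
    rw [br_e_E k l hkl] at h0
    exact h0
  have EQ3 : ∀ k l : ℤ, k ≠ l →
      d (E k k) - d (E l l) = br (d (E k l)) (E l k) + br (E k l) (d (E l k)) := by
    intro k l hkl
    have h0 := hbr (E k l) (E l k) (jE k l) (jE l k)
    rw [br_E_Erev k l, dsub _ _ (jE k k) (jE l l)] at h0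
    exact h0
  have EQ4 : ∀ k m l : ℤ, l ≠ k → m ≠ k → m ≠ l →
      d (E k l) = br (d (E k m)) (E m l) + br (E k m) (d (E m l)) := by
    intro k m l hlk hmk hml
    have h0 := hbr (E k m) (E m l) (jE k m) (jE m l)
    rw [br_EE_mid k m l hlk] at h0
    exact h0
  -- R3: diagonal of d (E j j) constant away from j
  have R3 : ∀ j k l : ℤ, j ≠ k → j ≠ l → d (E j j) l l = d (E j j) k k := by
    intro j k l hjk hjl
    have h2 := congrFun (congrFun (EQ1 k l j hjk hjl) k) l
    simp only [Matrix.add_apply, Matrix.zero_apply, br_unit_right, br_unit_left] at h2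
    simp only [if_neg (fun h : l = j => hjl h.symm), if_neg (fun h : k = j => hjk h.symm),
      if_pos rfl, eq_self_iff_true, if_true] at h2
    linear_combination -h2
  -- R6a
  have R6a : ∀ k l j : ℤ, j ≠ k → j ≠ l → d (E k l) j l = -(d (E j j) j k) := by
    intro k l j hjk hjl
    have h2 := congrFun (congrFun (EQ1 k l j hjk hjl) j) l
    simp only [Matrix.add_apply, Matrix.zero_apply, br_unit_right, br_unit_left] at h2
    simp only [if_neg (fun h : l = j => hjl h.symm), if_pos rfl, if_neg hjk, eq_self_iff_true, if_true] at h2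
    linear_combination h2
  -- R6b
  have R6b : ∀ k l j : ℤ, j ≠ k → j ≠ l → d (E k l) k j = -(d (E j j) l j) := by
    intro k l j hjk hjl
    have h2 := congrFun (congrFun (EQ1 k l j hjk hjl) k) j
    simp only [Matrix.add_apply, Matrix.zero_apply, br_unit_right, br_unit_left] at h2
    simp only [if_pos rfl, if_neg (fun h : k = j => hjk h.symm),
      if_neg (fun h : j = l => hjl h), eq_self_iff_true, if_true] at h2
    linear_combination -h2
  -- R6c1
  have R6c1 : ∀ k l m j : ℤ, j ≠ k → j ≠ l → m ≠ k → m ≠ j → d (E k l) m j = 0 := by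
    intro k l m j hjk hjl hmk hmj
    have h2 := congrFun (congrFun (EQ1 k l j hjk hjl) m) j
    simp only [Matrix.add_apply, Matrix.zero_apply, br_unit_right, br_unit_left] at h2
    simp only [if_pos rfl, if_neg hmj, if_neg hmk, if_neg (fun h : j = l => hjl h), eq_self_iff_true, if_true] at h2
    linear_combination -h2
  -- R6c2
  have R6c2 : ∀ k l m : ℤ, k ≠ l → m ≠ k → m ≠ l → d (E k l) m k = 0 := by
    intro k l m hkl hmk hml
    have h2 := congrFun (congrFun (EQ1 k l m hmk hml) m) k
    simp only [Matrix.add_apply, Matrix.zero_apply, br_unit_right, br_unit_left] at h2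
    simp only [if_pos rfl, if_neg (fun h : k = m => hmk h.symm), if_neg hmk,
      if_neg (fun h : k = l => hkl h), eq_self_iff_true, if_true] at h2
    linear_combination h2
  -- R6d : diagonal of d(E k l) vanishes off k,l
  have R6d : ∀ k l m : ℤ, k ≠ l → m ≠ k → m ≠ l → d (E k l) m m = 0 := by
    intro k l m hkl hmk hml
    have h2 := congrFun (congrFun (EQ2 k l hkl) m) m
    simp only [Matrix.add_apply, br_unit_right, br_unit_left] at h2
    simp only [if_neg hmk, if_neg hml, if_neg (fun h : m = k => hmk h), eq_self_iff_true, if_true] at h2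
    linear_combination h2
  -- R6e1
  have R6e1 : ∀ k l : ℤ, k ≠ l → d (E k l) k k = -(d (E k k) l k) := by
    intro k l hkl
    have h2 := congrFun (congrFun (EQ2 k l hkl) k) k
    simp only [Matrix.add_apply, br_unit_right, br_unit_left] at h2
    simp only [if_pos rfl, if_neg (fun h : k = l => hkl h), eq_self_iff_true, if_true] at h2
    linear_combination h2
  -- R6e2
  have R6e2 : ∀ k l : ℤ, k ≠ l → d (E k l) l l = d (E k k) l k := by
    intro k l hkl
    have h2 := congrFun (congrFun (EQ2 k l hkl) l) l
    simp only [Matrix.add_apply, br_unit_right, br_unit_left] at h2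
    simp only [if_pos rfl, if_neg (fun h : l = k => hkl h.symm), eq_self_iff_true, if_true] at h2
    linear_combination h2
  -- R6f : corner entry vanishes (char ≠ 2)
  have R6f : ∀ k l : ℤ, k ≠ l → d (E k l) l k = 0 := by
    intro k l hkl
    have h2 := congrFun (congrFun (EQ2 k l hkl) l) k
    simp only [Matrix.add_apply, br_unit_right, br_unit_left] at h2
    simp only [if_pos rfl, if_neg (fun h : k = l => hkl h),
      if_neg (fun h : l = k => hkl h.symm), eq_self_iff_true, if_true] at h2
    have h3 : 2 * d (E k l) l k = 0 := by linear_combination h2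
    rcases mul_eq_zero.mp h3 with h | h
    · exact absurd h two_ne
    · exact h
  -- R4 : diagonal of d (E k k) at k matches elsewhere
  have R4 : ∀ k l : ℤ, k ≠ l → d (E k k) k k = d (E k k) l l := by
    intro k l hkl
    have h2 := congrFun (congrFun (EQ2 k l hkl) k) l
    simp only [Matrix.add_apply, br_unit_right, br_unit_left] at h2
    simp only [if_pos rfl, if_neg (fun h : l = k => hkl h.symm), eq_self_iff_true, if_true] at h2
    linear_combination -h2
  -- R5 : the constant diagonal value is independent of the unit
  have R5 : ∀ k l m : ℤ, k ≠ l → m ≠ k → m ≠ l → d (E k k) m m = d (E l l) m m := by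
    intro k l m hkl hmk hml
    have h2 := congrFun (congrFun (EQ3 k l hkl) m) m
    simp only [Matrix.add_apply, Matrix.sub_apply, br_unit_right, br_unit_left] at h2
    simp only [if_neg hmk, if_neg hml, if_neg (fun h : m = l => hml h), eq_self_iff_true, if_true] at h2
    linear_combination h2
  -- antisymmetry of corner values
  have Ranti : ∀ k l : ℤ, k ≠ l →
      d (E k k) k k - d (E l l) k k = d (E k l) k l + d (E l k) l k := by
    intro k l hkl
    have h2 := congrFun (congrFun (EQ3 k l hkl) k) k
    simp only [Matrix.add_apply, Matrix.sub_apply, br_unit_right, br_unit_left] at h2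
    simp only [if_pos rfl, if_neg (fun h : k = l => hkl h), eq_self_iff_true, if_true] at h2
    linear_combination h2
  -- cocycle identity
  have Dcoc : ∀ k m l : ℤ, l ≠ k → m ≠ k → m ≠ l →
      d (E k l) k l = d (E k m) k m + d (E m l) m l := by
    intro k m l hlk hmk hml
    have h2 := congrFun (congrFun (EQ4 k m l hlk hmk hml) k) l
    simp only [Matrix.add_apply, br_unit_right, br_unit_left] at h2
    simp only [if_pos rfl, if_neg (fun h : k = m => hmk h.symm),
      if_neg (fun h : l = m => hml h.symm), eq_self_iff_true, if_true] at h2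
    linear_combination h2
  -- diagonal of d(E i i) is globally constant
  have wdiag : ∀ i m m' : ℤ, d (E i i) m m = d (E i i) m' m' := by
    intro i m m'
    rcases eq_or_ne m m' with rfl | hmm
    · rfl
    rcases eq_or_ne m i with rfl | hmi
    · exact R4 m m' hmm
    rcases eq_or_ne m' i with rfl | hm'i
    · exact (R4 m' m (Ne.symm hmi)).symm
    · exact R3 i m' m (Ne.symm hm'i) (Ne.symm hmi)
  have wconst : ∀ i m : ℤ, d (E i i) m m = d (E 0 0) 0 0 := by
    intro i m
    have hm'i : ((i.natAbs : ℤ) + 1) ≠ i := by omega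
    have hm'0 : ((i.natAbs : ℤ) + 1) ≠ 0 := by omega
    calc d (E i i) m m = d (E i i) ((i.natAbs : ℤ) + 1) ((i.natAbs : ℤ) + 1) := wdiag _ _ _
      _ = d (E 0 0) ((i.natAbs : ℤ) + 1) ((i.natAbs : ℤ) + 1) := by
          rcases eq_or_ne i 0 with rfl | hi0
          · rfl
          · exact R5 i 0 _ hi0 hm'i hm'0
      _ = d (E 0 0) 0 0 := wdiag _ _ _
  have Danti : ∀ k l : ℤ, k ≠ l → d (E k l) k l + d (E l k) l k = 0 := by
    intro k l hkl
    have h := Ranti k l hkl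
    rw [wconst k k, wconst l k] at h
    linear_combination -h
  -- ==== the matrix y ====
  set y : Matrix ℤ ℤ F := fun k i =>
    if k = i then (if k = 0 then 0 else d (E k 0) k 0) else d (E i i) k i with hydef
  have yoff : ∀ k i : ℤ, k ≠ i → y k i = d (E i i) k i := by
    intro k i h
    show (if k = i then (if k = 0 then 0 else d (E k 0) k 0) else d (E i i) k i) = _
    rw [if_neg h]
  have ydiagk : ∀ k : ℤ, k ≠ 0 → y k k = d (E k 0) k 0 := by
    intro k h
    show (if k = k then (if k = 0 then 0 else d (E k 0) k 0) else d (E k k) k k) = _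
    rw [if_pos rfl, if_neg h]
  have ydiag0 : y 0 0 = (0:F) := by
    show (if (0:ℤ) = 0 then (if (0:ℤ) = 0 then (0:F) else d (E 0 0) 0 0) else d (E 0 0) 0 0) = 0
    simp
  have ydd : ∀ k l : ℤ, k ≠ l → y k k - y l l = d (E k l) k l := by
    intro k l hkl
    rcases eq_or_ne k 0 with rfl | hk0
    · rw [ydiag0, ydiagk l (Ne.symm hkl)]
      have h := Danti 0 l hkl
      linear_combination -h
    · rcases eq_or_ne l 0 with rfl | hl0
      · rw [ydiagk k hk0, ydiag0]
        ring
      · rw [ydiagk k hk0, ydiagk l hl0]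
        have h1 := Dcoc k 0 l (Ne.symm hkl) (Ne.symm hk0) (Ne.symm hl0)
        have h2 := Danti 0 l (Ne.symm hl0)
        linear_combination -h1 - h2
  -- y is a Jacobi matrix
  have jy : IsJacobi y := by
    obtain ⟨n, hn⟩ := band_of_pairs (fun k i => y k i)
      (by
        intro f
        obtain ⟨N, hN⟩ := sep f
        refine ⟨N, fun k i hk => ?_⟩
        have hki : k ≠ i := by
          intro h; rw [h, sub_self, abs_zero] at hk; omega
        show y k i * (f i - f k) = 0
        rw [yoff k i hki]
        exact hN k i hk)
    exact ⟨n, hn⟩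
  -- d on off-diagonal matrix units is ad y
  have dE_eq : ∀ k l : ℤ, k ≠ l → d (E k l) = br y (E k l) := by
    intro k l hkl
    funext m j
    rw [br_unit_right]
    by_cases hj : j = l
    · rw [if_pos hj, hj]
      by_cases hmk : m = k
      · rw [if_pos hmk, hmk]
        exact (ydd k l hkl).symm
      · rw [if_neg hmk, sub_zero]
        by_cases hml : m = l
        · rw [hml, yoff l k (Ne.symm hkl)]
          exact R6e2 k l hkl
        · rw [yoff m k hmk]
          have h1 := R6a k l m hmk hml
          have h2 := R2 m k (fun h => hmk h.symm)
          linear_combination h1 - h2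
    · rw [if_neg hj]
      by_cases hmk : m = k
      · rw [if_pos hmk, hmk]
        by_cases hjk : j = k
        · rw [hjk, yoff l k (Ne.symm hkl)]
          have h1 := R6e1 k l hkl
          linear_combination h1
        · rw [yoff l j (fun h : l = j => hj h.symm)]
          have h1 := R6b k l j hjk hj
          linear_combination h1
      · rw [if_neg hmk, sub_zero]
        by_cases hmj : m = j
        · rw [← hmj]
          exact R6d k l m hkl hmk (fun h => hj (hmj ▸ h))
        · by_cases hjk : j = k
          · rw [hjk]
            by_cases hml : m = l
            · rw [hml]
              exact R6f k l hkl
            · exact R6c2 k l m hkl hmk hml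
          · exact R6c1 k l m j hjk hj hmk hmj
  -- d on diagonal matrix units is ad y plus a central element
  have we_eq : ∀ i : ℤ, d (E i i) = br y (E i i) + (d (E 0 0) 0 0) • IdM := by
    intro i
    funext k j
    rw [Matrix.add_apply, br_unit_right, Matrix.smul_apply]
    have hid : (IdM : Matrix ℤ ℤ F) k j = if j = k then 1 else 0 := by
      show (if j = k + 0 then (1:F) else 0) = _
      rw [add_zero]
    rw [hid, smul_eq_mul]
    by_cases hki : k = i
    · by_cases hji : j = i
      · rw [if_pos hji, if_pos hki, if_pos (show j = k by rw [hji, hki]), hki, hji,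
          wconst i i]
        ring
      · rw [if_neg hji, if_pos hki, if_neg (show ¬ j = k by rw [hki]; exact hji), hki]
        rw [yoff i j (fun h : i = j => hji h.symm)]
        have h2 := R2 i j hji
        linear_combination h2
    · by_cases hji : j = i
      · rw [if_pos hji, if_neg hki, if_neg (show ¬ j = k by rw [hji]; exact fun h => hki h.symm),
          hji, yoff k i hki]
        ring
      · rw [if_neg hji, if_neg hki]
        by_cases hjk : j = k
        · rw [if_pos hjk, hjk, wconst i k]
          ring
        · rw [if_neg hjk, R1 i k j hki hji (fun h => hjk h.symm)]
          ring
  -- ==== comparison of d with ad y on general Jacobi matrices ====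
  -- off-diagonal entries of d a - [y,a] vanish
  have zoff : ∀ a, IsJacobi a → ∀ i j : ℤ, i ≠ j → (d a - br y a) i j = 0 := by
    intro a ha i j hij
    have hb : IsJacobi (br (E j j) a) := jbr (jE j j) ha
    have h1 : d (br (E j j) a) = br (d (E j j)) a + br (E j j) (d a) := hbr _ _ (jE j j) ha
    have h2 : d (br (E i i) (br (E j j) a)) =
        br (d (E i i)) (br (E j j) a) + br (E i i) (br (d (E j j)) a + br (E j j) (d a)) := by
      rw [hbr _ _ (jE i i) hb, h1]
    have hex : br (E i i) (br (E j j) a) = -((a i j) • E i j + (a j i) • E j i) :=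
      extraction a i j hij
    have hjv : IsJacobi ((a i j) • E i j + (a j i) • E j i) :=
      jadd (jsmul _ (jE i j)) (jsmul _ (jE j i))
    have hdneg : ∀ v, IsJacobi v → d (-v) = -(d v) := by
      intro v hv
      have h := hsmul (-1) v hv
      rwa [neg_one_smul, neg_one_smul] at h
    have h3 : d (br (E i i) (br (E j j) a)) =
        -((a i j) • br y (E i j) + (a j i) • br y (E j i)) := by
      rw [hex, hdneg _ hjv, hadd _ _ (jsmul _ (jE i j)) (jsmul _ (jE j i)),
        hsmul _ _ (jE i j), hsmul _ _ (jE j i), dE_eq i j hij, dE_eq j i (Ne.symm hij)]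
    have h4 : br y (br (E i i) (br (E j j) a)) =
        br (br y (E i i)) (br (E j j) a)
          + br (E i i) (br (br y (E j j)) a + br (E j j) (br y a)) := by
      rw [leib jy (jE i i) hb, leib jy (jE j j) ha]
    have h5 : br y (br (E i i) (br (E j j) a)) =
        -((a i j) • br y (E i j) + (a j i) • br y (E j i)) := by
      rw [hex, br_neg_right jy, br_add_right jy, br_smul_right jy, br_smul_right jy]
    have hwi : br (d (E i i)) (br (E j j) a) = br (br y (E i i)) (br (E j j) a) := by
      rw [we_eq i, br_add_left hb, br_smul_left hb, br_IdM_left, smul_zero, add_zero]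
    have hwj : br (d (E j j)) a = br (br y (E j j)) a := by
      rw [we_eq j, br_add_left ha, br_smul_left ha, br_IdM_left, smul_zero, add_zero]
    have h2' := h2
    rw [hwi, hwj, h3] at h2'
    have h4' := h4
    rw [h5] at h4'
    have h7 : br (E i i) (br (br y (E j j)) a + br (E j j) (d a))
        = br (E i i) (br (br y (E j j)) a + br (E j j) (br y a)) :=
      add_left_cancel (h2'.symm.trans h4')
    have h8 : br (E i i) (br (E j j) (d a - br y a)) = 0 := by
      rw [br_sub_right (jE j j) (d a) (br y a)]
      have e : br (E j j) (d a) - br (E j j) (br y a) =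
          (br (br y (E j j)) a + br (E j j) (d a))
            - (br (br y (E j j)) a + br (E j j) (br y a)) := by abel
      rw [e, br_sub_right (jE i i), h7, sub_self]
    have h9 := extraction (d a - br y a) i j hij
    rw [h8] at h9
    have h10 := congrFun (congrFun h9.symm i) j
    simp only [Matrix.zero_apply, Matrix.neg_apply, Matrix.add_apply, Matrix.smul_apply,
      smul_eq_mul] at h10
    have hE1 : (E i j : Matrix ℤ ℤ F) i j = 1 := by
      show (if i = i ∧ j = j then (1:F) else 0) = 1
      simp
    have hE2 : (E j i : Matrix ℤ ℤ F) i j = 0 := by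
      show (if i = j ∧ j = i then (1:F) else 0) = 0
      simp [hij]
    rw [hE1, hE2] at h10
    linear_combination -h10
  -- diagonal entries of d a - [y,a] are constant
  have zdiag : ∀ a, IsJacobi a → ∀ i j : ℤ, i ≠ j → (d a - br y a) i i = (d a - br y a) j j := by
    intro a ha i j hij
    have ha' : IsJacobi (br (E i j) a) := jbr (jE i j) ha
    have h1 : d (br (E i j) a) = br (br y (E i j)) a + br (E i j) (d a) := by
      rw [hbr _ _ (jE i j) ha, dE_eq i j hij]
    have h2 : br y (br (E i j) a) = br (br y (E i j)) a + br (E i j) (br y a) :=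
      leib jy (jE i j) ha
    have h3 : d (br (E i j) a) - br y (br (E i j) a) = br (E i j) (d a - br y a) := by
      rw [h1, h2, br_sub_right (jE i j)]
      abel
    have h4 := zoff _ ha' i j hij
    have h5 := congrFun (congrFun h3 i) j
    have h6 : br (E i j) (d a - br y a) i j = 0 := by rw [← h5]; exact h4
    rw [br_unit_left] at h6
    simp only [eq_self_iff_true, if_true] at h6
    linear_combination -h6
  -- hence d a - [y,a] is a multiple of the identity
  have zfull : ∀ a, IsJacobi a → d a - br y a = ((d a - br y a) 0 0) • IdM := by
    intro a ha
    funext i j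
    rw [Matrix.smul_apply]
    have hid : (IdM : Matrix ℤ ℤ F) i j = if j = i then 1 else 0 := by
      show (if j = i + 0 then (1:F) else 0) = _
      rw [add_zero]
    rw [hid, smul_eq_mul]
    by_cases hji : j = i
    · rw [if_pos hji, mul_one, hji]
      rcases eq_or_ne i 0 with rfl | hi0
      · rfl
      · exact zdiag a ha i 0 hi0
    · rw [if_neg hji, mul_zero]
      exact zoff a ha i j (fun h => hji h.symm)
  -- d - ad y kills brackets
  have zbr : ∀ u v, IsJacobi u → IsJacobi v → d (br u v) - br y (br u v) = 0 := by
    intro u v hu hv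
    have h3 : d (br u v) - br y (br u v) = br (d u - br y u) v + br u (d v - br y v) := by
      rw [hbr u v hu hv, leib jy hu hv, br_sub_left hv (d u) (br y u),
        br_sub_right hu (d v) (br y v)]
      abel
    rw [h3, zfull u hu, zfull v hv, br_smul_left hv, br_smul_right hu, br_IdM_left,
      br_IdM_right, smul_zero, smul_zero, add_zero]
  -- conclude via perfectness
  have final : ∀ a, IsJacobi a → d a - br y a = 0 := by
    apply bracket_gen
    · intro u v hu hv hPu hPv
      have h1 : d (u + v) = d u + d v := hadd u v hu hv
      have h2 : br y (u + v) = br y u + br y v := br_add_right jy u v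
      have h3 : d (u+v) - br y (u+v) = (d u - br y u) + (d v - br y v) := by
        rw [h1, h2]; abel
      rw [h3, hPu, hPv, add_zero]
    · intro u v hu hv
      exact zbr u v hu hv
  refine ⟨y, jy, ?_⟩
  intro a ha
  have h := final a ha
  rwa [sub_eq_zero] at h
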